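/- arXiv:2407.20913 — 4 statements merged into one kernel-verified Lean document; each statement's English description precedes it below -/
import Mathlib

section
/- Theorem 4.1, case B2. In addition to the common setup, assume all four regime pairs share the same drift and volatility: b_{ij} = b and σ_{ij} = σ for all i, j ∈ {1,2} (hence K_{11} = K_{12} = K_{21} = K_{22} =: K), and assume c12 < 0, c21 > 0, χ12 > 0, χ21 > 0 and c12 + c21 > 0 (Condition B2). Then the quadruple v11(x) = K·x^γ − c12, v12(x) = K·x^γ − c12, v21(x) = K·x^γ, v22(x) = K·x^γ solves the QVI system at every x > 0. -/
noncomputable def Lop (b σ : ℝ) (v : ℝ → ℝ) (x : ℝ) : ℝ :=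
  (1/2) * σ^2 * x^2 * deriv (deriv v) x + b * x * deriv v x

def solvesQVI (r γ c12 c21 χ12 χ21 b11 σ11 b12 σ12 b21 σ21 b22 σ22 : ℝ)
    (v11 v12 v21 v22 : ℝ → ℝ) (x : ℝ) : Prop :=
  max (min (r * v11 x - Lop b11 σ11 v11 x - x ^ γ) (v11 x - (v21 x - c12)))
      (v11 x - (v12 x + χ12)) = 0 ∧
  max (min (r * v12 x - Lop b12 σ12 v12 x - x ^ γ) (v12 x - (v22 x - c12)))
      (v12 x - (v11 x + χ21)) = 0 ∧
  max (min (r * v21 x - Lop b21 σ21 v21 x - x ^ γ) (v21 x - (v11 x - c21)))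
      (v21 x - (v22 x + χ12)) = 0 ∧
  max (min (r * v22 x - Lop b22 σ22 v22 x - x ^ γ) (v22 x - (v12 x - c21)))
      (v22 x - (v21 x + χ21)) = 0

lemma deriv1 (K C γ : ℝ) : ∀ x ∈ Set.Ioi (0:ℝ),
    deriv (fun y : ℝ => K * y ^ γ - C) x = K * (γ * x ^ (γ-1)) := by
  intro x hx
  exact (((Real.hasDerivAt_rpow_const (Or.inl (ne_of_gt hx))).const_mul K).sub_const C).deriv

lemma Lop_pow (b σ K C γ x : ℝ) (hx : 0 < x) :
    Lop b σ (fun y : ℝ => K * y ^ γ - C) x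
      = (b * γ + (1/2) * σ^2 * γ * (γ-1)) * (K * x ^ γ) := by
  have hd1 : deriv (fun y : ℝ => K * y ^ γ - C) x = K * (γ * x ^ (γ-1)) :=
    deriv1 K C γ x hx
  have hev : deriv (fun y : ℝ => K * y ^ γ - C) =ᶠ[nhds x]
      fun y : ℝ => K * (γ * y ^ (γ-1)) :=
    Filter.eventually_of_mem (isOpen_Ioi.mem_nhds hx) (deriv1 K C γ)
  have hd2 : deriv (deriv (fun y : ℝ => K * y ^ γ - C)) x
      = K * (γ * ((γ-1) * x ^ (γ-2))) := by
    rw [hev.deriv_eq]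
    have := (((Real.hasDerivAt_rpow_const (p := γ - 1) (Or.inl (ne_of_gt hx))).const_mul γ).const_mul K)
    have h2 : γ - 1 - 1 = γ - 2 := by ring
    rw [h2] at this
    exact this.deriv
  have hx2 : x^2 * x^(γ-2) = x^γ := by
    rw [← Real.rpow_natCast x 2, ← Real.rpow_add hx]; norm_num
  have hx1 : x * x^(γ-1) = x^γ := by
    nth_rewrite 1 [← Real.rpow_one x]
    rw [← Real.rpow_add hx]; norm_num
  rw [Lop, hd1, hd2]
  linear_combination ((1/2) * σ^2 * K * γ * (γ-1)) * hx2 + (b * K * γ) * hx1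

lemma mm1 (a b c : ℝ) (hb : b = 0) (ha : 0 ≤ a) (hc : c ≤ 0) : max (min a b) c = 0 := by
  rw [hb, min_eq_right ha, max_eq_left hc]

lemma mm2 (a b c : ℝ) (ha : a = 0) (hb : 0 ≤ b) (hc : c ≤ 0) : max (min a b) c = 0 := by
  rw [ha, min_eq_left hb, max_eq_left hc]

set_option maxHeartbeats 1000000 in
theorem thm4_1_B2
    (r γ c12 c21 χ12 χ21 : ℝ)
    (b11 σ11 b12 σ12 b21 σ21 b22 σ22 : ℝ)
    (K11 K12 K21 K22 : ℝ)
    (hr : 0 < r) (hγ0 : 0 < γ) (hγ1 : γ < 1)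
    (hσ11 : 0 < σ11) (hσ12 : 0 < σ12) (hσ21 : 0 < σ21) (hσ22 : 0 < σ22)
    (hd11 : 0 < r - b11*γ + (1/2)*σ11^2*γ*(1-γ))
    (hd12 : 0 < r - b12*γ + (1/2)*σ12^2*γ*(1-γ))
    (hd21 : 0 < r - b21*γ + (1/2)*σ21^2*γ*(1-γ))
    (hd22 : 0 < r - b22*γ + (1/2)*σ22^2*γ*(1-γ))
    (hrb11 : b11 < r) (hrb12 : b12 < r) (hrb21 : b21 < r) (hrb22 : b22 < r)
    (hK11 : K11 = 1/(r - b11*γ + (1/2)*σ11^2*γ*(1-γ)))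
    (hK12 : K12 = 1/(r - b12*γ + (1/2)*σ12^2*γ*(1-γ)))
    (hK21 : K21 = 1/(r - b21*γ + (1/2)*σ21^2*γ*(1-γ)))
    (hK22 : K22 = 1/(r - b22*γ + (1/2)*σ22^2*γ*(1-γ)))
    (heqb12 : b12 = b11) (heqb21 : b21 = b11) (heqb22 : b22 = b11)
    (heqσ12 : σ12 = σ11) (heqσ21 : σ21 = σ11) (heqσ22 : σ22 = σ11)
    (K : ℝ) (hK : K = K11)
    (hc12 : c12 < 0) (hc21 : 0 < c21) (hχ12 : 0 < χ12) (hχ21 : 0 < χ21)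
    (hcsum : 0 < c12 + c21)
    :
    ∀ x : ℝ, 0 < x →
      solvesQVI r γ c12 c21 χ12 χ21 b11 σ11 b12 σ12 b21 σ21 b22 σ22
        (fun y => K * y ^ γ - c12)
        (fun y => K * y ^ γ - c12)
        (fun y => K * y ^ γ)
        (fun y => K * y ^ γ) x := by
  intro x hx
  rw [heqb12, heqb21, heqb22, heqσ12, heqσ21, heqσ22]
  have hKd : K * (r - b11*γ + (1/2)*σ11^2*γ*(1-γ)) = 1 := by
    rw [hK, hK11, one_div, inv_mul_cancel₀ (ne_of_gt hd11)]
  have hL : Lop b11 σ11 (fun y : ℝ => K * y ^ γ - c12) x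
      = (b11 * γ + (1/2) * σ11^2 * γ * (γ-1)) * (K * x ^ γ) :=
    Lop_pow b11 σ11 K c12 γ x hx
  have hL0 : Lop b11 σ11 (fun y : ℝ => K * y ^ γ) x
      = (b11 * γ + (1/2) * σ11^2 * γ * (γ-1)) * (K * x ^ γ) := by
    rw [show (fun y : ℝ => K * y ^ γ) = fun y : ℝ => K * y ^ γ - 0 from
      funext fun y => by ring]
    exact Lop_pow b11 σ11 K 0 γ x hx
  have hE : r * (K * x ^ γ - c12) - Lop b11 σ11 (fun y : ℝ => K * y ^ γ - c12) x - x ^ γ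
      = r * (-c12) := by
    rw [hL]; linear_combination (x ^ γ) * hKd
  have hE0 : r * (K * x ^ γ) - Lop b11 σ11 (fun y : ℝ => K * y ^ γ) x - x ^ γ = 0 := by
    rw [hL0]; linear_combination (x ^ γ) * hKd
  have hrc : 0 ≤ r * (-c12) := by nlinarith
  simp only [solvesQVI]
  refine ⟨?_, ?_, ?_, ?_⟩
  · refine mm1 _ _ _ ?_ ?_ ?_
    · ring
    · rw [hE]; exact hrc
    · linarith
  · refine mm1 _ _ _ ?_ ?_ ?_
    · ring
    · rw [hE]; exact hrc
    · linarith
  · refine mm2 _ _ _ ?_ ?_ ?_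
    · rw [hE0]
    · linarith
    · linarith
  · refine mm2 _ _ _ ?_ ?_ ?_
    · rw [hE0]
    · linarith
    · linarith
end

section
/- Theorem 4.2, case B3. In addition to the common setup, assume b11 = b12, σ11 = σ12, b21 = b22, σ21 = σ22, and K₁ := K_{11} = K_{12} < K_{21} = K_{22} =: K₂; assume c12 > 0, c21 > 0, χ12 < 0, χ21 > 0 and χ12 + χ21 > 0 (Condition B3). Let m⁺ := m_{11}⁺ (= m_{12}⁺), x* := (m⁺·c12 / ((m⁺ − γ)·(K₂ − K₁)))^{1/γ} and A := (K₂ − K₁)·(γ/m⁺)·(x*)^{γ − m⁺}. Define v11(x) = K₁·x^γ + A·x^{m⁺} + χ12 for 0 < x < x* and = K₂·x^γ − c12 + χ12 for x ≥ x*; v12(x) = K₁·x^γ + A·x^{m⁺} for 0 < x < x* and = K₂·x^γ − c12 for x ≥ x*; v21(x) = K₂·x^γ + χ12 and v22(x) = K₂·x^γ for all x > 0. Then this quadruple solves the QVI system at every x > 0 with x ≠ x*. -/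
open Real Filter in
private lemma Lop_congr' {b σ : ℝ} {f g : ℝ → ℝ} {x : ℝ} (h : f =ᶠ[nhds x] g) :
    Lop b σ f x = Lop b σ g x := by
  unfold Lop
  rw [h.deriv_eq, (h.deriv).deriv_eq]

open Real Filter in
private lemma hasDerivAt_combo' (a p c q d : ℝ) {x : ℝ} (hx : 0 < x) :
    HasDerivAt (fun y : ℝ => a * y ^ p + c * y ^ q + d)
      (a * (p * x ^ (p - 1)) + c * (q * x ^ (q - 1))) x := by
  have h1 := (Real.hasDerivAt_rpow_const (p := p) (Or.inl hx.ne')).const_mul a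
  have h2 := (Real.hasDerivAt_rpow_const (p := q) (Or.inl hx.ne')).const_mul c
  simpa using (h1.add h2).add_const d

open Real Filter in
private lemma deriv_combo' (a p c q d : ℝ) {x : ℝ} (hx : 0 < x) :
    deriv (fun y : ℝ => a * y ^ p + c * y ^ q + d) x
      = a * (p * x ^ (p - 1)) + c * (q * x ^ (q - 1)) :=
  (hasDerivAt_combo' a p c q d hx).deriv

open Real Filter in
private lemma deriv2_combo' (a p c q d : ℝ) {x : ℝ} (hx : 0 < x) :
    deriv (deriv (fun y : ℝ => a * y ^ p + c * y ^ q + d)) x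
      = (a*p) * ((p-1) * x ^ (p - 2)) + (c*q) * ((q-1) * x ^ (q - 2)) := by
  have hev : deriv (fun y : ℝ => a * y ^ p + c * y ^ q + d)
      =ᶠ[nhds x] (fun y => (a*p) * y ^ (p-1) + (c*q) * y ^ (q-1) + 0) := by
    filter_upwards [Ioi_mem_nhds hx] with y hy
    rw [deriv_combo' a p c q d hy]; ring
  rw [hev.deriv_eq, deriv_combo' (a*p) (p-1) (c*q) (q-1) 0 hx,
    show p - 1 - 1 = p - 2 from by ring, show q - 1 - 1 = q - 2 from by ring]

open Real Filter in
private lemma Lop_eq' (b σ a p c q d : ℝ) {f : ℝ → ℝ} {x : ℝ} (hx : 0 < x)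
    (hf : f =ᶠ[nhds x] fun y => a * y ^ p + c * y ^ q + d) :
    Lop b σ f x
      = a * (b*p + (1/2)*σ^2*p*(p-1)) * x ^ p
        + c * (b*q + (1/2)*σ^2*q*(q-1)) * x ^ q := by
  rw [Lop_congr' hf]
  unfold Lop
  rw [deriv_combo' a p c q d hx, deriv2_combo' a p c q d hx]
  have e1 : ∀ u : ℝ, x * x ^ (u-1) = x ^ u := fun u => by
    have h := Real.rpow_add hx (u-1) 1
    rw [Real.rpow_one, show u-1+1 = u from by ring] at h
    linear_combination -h
  have e2 : ∀ u : ℝ, x^(2:ℕ) * x ^ (u-2) = x ^ u := fun u => by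
    have h := Real.rpow_add hx (u-2) ((2:ℕ):ℝ)
    rw [Real.rpow_natCast, show u-2+((2:ℕ):ℝ) = u from by push_cast; ring] at h
    linear_combination -h
  linear_combination ((1/2)*σ^2*a*p*(p-1)) * e2 p + (b*a*p) * e1 p
    + ((1/2)*σ^2*c*q*(q-1)) * e2 q + (b*c*q) * e1 q

open Real Filter in
private lemma young_ineq' {t γ m : ℝ} (ht : 0 < t) (hγ : 0 < γ) (hm : γ < m) :
    m * t ^ γ ≤ γ * t ^ m + (m - γ) := by
  have hm0 : 0 < m := hγ.trans hm
  have h := Real.geom_mean_le_arith_mean2_weighted (w₁ := γ/m) (w₂ := (m-γ)/m)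
      (p₁ := t^m) (p₂ := 1) (by positivity) (div_nonneg (by linarith) hm0.le)
      (Real.rpow_pos_of_pos ht m).le zero_le_one (by field_simp; ring)
  rw [Real.one_rpow, mul_one, mul_one] at h
  have ht' : (t^m) ^ (γ/m) = t^γ := by
    rw [← Real.rpow_mul ht.le, mul_div_cancel₀ _ hm0.ne']
  rw [ht'] at h
  have h2 := mul_le_mul_of_nonneg_left h hm0.le
  have e : m * (γ/m * t^m + (m-γ)/m) = γ*t^m + (m-γ) := by field_simp
  linarith [h2, e.le, e.ge]

open Real Filter in
private lemma young_scaled' {x s γ m : ℝ} (hx : 0 < x) (hs : 0 < s) (hγ : 0 < γ) (hm : γ < m) :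
    m * x ^ γ * s ^ m ≤ γ * x ^ m * s ^ γ + (m - γ) * (s ^ γ * s ^ m) := by
  have h := young_ineq' (div_pos hx hs) hγ hm
  rw [Real.div_rpow hx.le hs.le, Real.div_rpow hx.le hs.le] at h
  have hU : (0:ℝ) < s ^ γ := Real.rpow_pos_of_pos hs γ
  have hV : (0:ℝ) < s ^ m := Real.rpow_pos_of_pos hs m
  have hU' := hU.ne'
  have hV' := hV.ne'
  have h2 := mul_le_mul_of_nonneg_right h (le_of_lt (mul_pos hU hV))
  calc m * x^γ * s^m = (m * (x^γ / s^γ)) * (s^γ * s^m) := by field_simp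
    _ ≤ (γ * (x^m / s^m) + (m-γ)) * (s^γ * s^m) := h2
    _ = γ * x^m * s^γ + (m-γ)*(s^γ*s^m) := by field_simp

set_option maxHeartbeats 4000000 in
theorem thm4_2_B3
    (r γ c12 c21 χ12 χ21 : ℝ)
    (b11 σ11 b12 σ12 b21 σ21 b22 σ22 : ℝ)
    (K11 K12 K21 K22 : ℝ)
    (hr : 0 < r) (hγ0 : 0 < γ) (hγ1 : γ < 1)
    (hσ11 : 0 < σ11) (hσ12 : 0 < σ12) (hσ21 : 0 < σ21) (hσ22 : 0 < σ22)
    (hd11 : 0 < r - b11*γ + (1/2)*σ11^2*γ*(1-γ))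
    (hd12 : 0 < r - b12*γ + (1/2)*σ12^2*γ*(1-γ))
    (hd21 : 0 < r - b21*γ + (1/2)*σ21^2*γ*(1-γ))
    (hd22 : 0 < r - b22*γ + (1/2)*σ22^2*γ*(1-γ))
    (hrb11 : b11 < r) (hrb12 : b12 < r) (hrb21 : b21 < r) (hrb22 : b22 < r)
    (hK11 : K11 = 1/(r - b11*γ + (1/2)*σ11^2*γ*(1-γ)))
    (hK12 : K12 = 1/(r - b12*γ + (1/2)*σ12^2*γ*(1-γ)))
    (hK21 : K21 = 1/(r - b21*γ + (1/2)*σ21^2*γ*(1-γ)))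
    (hK22 : K22 = 1/(r - b22*γ + (1/2)*σ22^2*γ*(1-γ)))
    (heqb12 : b12 = b11) (heqσ12 : σ12 = σ11)
    (heqb22 : b22 = b21) (heqσ22 : σ22 = σ21)
    (K₁ K₂ : ℝ) (hK₁ : K₁ = K11) (hK₂ : K₂ = K21)
    (hKlt : K₁ < K₂)
    (m : ℝ) (hm : m = 1/2 - b11/σ11^2 + Real.sqrt ((1/2 - b11/σ11^2)^2 + 2*r/σ11^2))
    (xs A : ℝ)
    (hxs : xs = (m * c12 / ((m - γ) * (K₂ - K₁))) ^ (1/γ))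
    (hA : A = (K₂ - K₁) * (γ / m) * xs ^ (γ - m))
    (hc12 : 0 < c12) (hc21 : 0 < c21) (hχ12 : χ12 < 0) (hχ21 : 0 < χ21)
    (hχsum : 0 < χ12 + χ21)
    :
    ∀ x : ℝ, 0 < x → x ≠ xs →
      solvesQVI r γ c12 c21 χ12 χ21 b11 σ11 b12 σ12 b21 σ21 b22 σ22
        (fun y => if y < xs then K₁ * y ^ γ + A * y ^ m + χ12 else K₂ * y ^ γ - c12 + χ12)
        (fun y => if y < xs then K₁ * y ^ γ + A * y ^ m else K₂ * y ^ γ - c12)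
        (fun y => K₂ * y ^ γ + χ12)
        (fun y => K₂ * y ^ γ) x := by
  subst heqb12 heqσ12 heqb22 heqσ22
  have hK1v : K₁ = 1/(r - b12*γ + (1/2)*σ12^2*γ*(1-γ)) := hK₁.trans hK11
  have hK2v : K₂ = 1/(r - b22*γ + (1/2)*σ22^2*γ*(1-γ)) := hK₂.trans hK21
  have hKD1 : K₁ * (r - b12*γ + (1/2)*σ12^2*γ*(1-γ)) = 1 := by
    rw [hK1v]; exact one_div_mul_cancel hd11.ne'
  have hKD2 : K₂ * (r - b22*γ + (1/2)*σ22^2*γ*(1-γ)) = 1 := by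
    rw [hK2v]; exact one_div_mul_cancel hd21.ne'
  have hK1pos : 0 < K₁ := by rw [hK1v]; positivity
  have hK21pos : 0 < K₂ - K₁ := sub_pos.2 hKlt
  have hσ2 : (0:ℝ) < σ12^2 := by positivity
  set s : ℝ := Real.sqrt ((1/2 - b12/σ12^2)^2 + 2*r/σ12^2) with hs
  have hs2 : s^2 = (1/2 - b12/σ12^2)^2 + 2*r/σ12^2 :=
    Real.sq_sqrt (by positivity)
  have hs0 : 0 ≤ s := Real.sqrt_nonneg _
  have hsub : m - (1/2 - b12/σ12^2) = s := by rw [hm]; ring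
  have key : m^2 - (1 - 2*(b12/σ12^2))*m - 2*(r/σ12^2) = 0 := by
    linear_combination (m - (1/2 - b12/σ12^2) + s) * hsub + hs2
  have hsα : 1/2 - b12/σ12^2 ≤ m := by rw [hm]; linarith [hs0]
  have h6 : (1/2 - b12/σ12^2)^2 < s^2 := by
    have h60 : 0 < 2*r/σ12^2 := by positivity
    linarith [hs2]
  have h7 : -(1/2 - b12/σ12^2) < s := by
    by_contra hcon
    push_neg at hcon
    have h8 : s^2 ≤ (-(1/2 - b12/σ12^2))^2 := pow_le_pow_left₀ hs0 hcon 2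
    rw [neg_sq] at h8
    linarith [h6, h8]
  have hm0 : 0 < m := by rw [hm]; linarith [h7]
  have hb2 : b12/σ12^2 * σ12^2 = b12 := div_mul_cancel₀ _ hσ2.ne'
  have hr2 : r/σ12^2 * σ12^2 = r := div_mul_cancel₀ _ hσ2.ne'
  have hψm : (1/2)*σ12^2*m*(m-1) + b12*m - r = 0 := by
    linear_combination (σ12^2/2) * key - m * hb2 + hr2
  have hψγ : (1/2)*σ12^2*γ*(γ-1) + b12*γ - r
      = -(r - b12*γ + (1/2)*σ12^2*γ*(1-γ)) := by ring
  have hmul : m * ((1/2)*σ12^2*(m-1) + b12) = r := by linear_combination hψm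
  have h5 : 0 < (1/2)*σ12^2*(m-1) + b12 := by
    have hX : (1/2)*σ12^2*(m-1) + b12 = r / m := by
      rw [eq_div_iff hm0.ne']; linear_combination hmul
    rw [hX]; exact div_pos hr hm0
  have hσγ : 0 < (1/2)*σ12^2*γ := by positivity
  have hbig : 0 < (1/2)*σ12^2*(m+γ-1) + b12 := by linarith [h5, hσγ]
  have hkey2 : (m - γ) * ((1/2)*σ12^2*(m+γ-1) + b12)
      = (r - b12*γ + (1/2)*σ12^2*γ*(1-γ)) := by linear_combination hψm - hψγ
  have hmγ : γ < m := by
    have hdq : m - γ = (r - b12*γ + (1/2)*σ12^2*γ*(1-γ))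
        / ((1/2)*σ12^2*(m+γ-1) + b12) := by
      rw [eq_div_iff hbig.ne']; linear_combination hkey2
    have hpos : 0 < m - γ := hdq ▸ div_pos hd11 hbig
    linarith
  have hmγ0 : (0:ℝ) < m - γ := by linarith
  have hxsbase : 0 < m * c12 / ((m-γ)*(K₂-K₁)) :=
    div_pos (mul_pos hm0 hc12) (mul_pos hmγ0 hK21pos)
  have hxs0 : 0 < xs := by
    rw [hxs]; exact Real.rpow_pos_of_pos hxsbase _
  have hxsγ : (m-γ)*(K₂-K₁)*xs^γ = m * c12 := by
    rw [hxs, ← Real.rpow_mul hxsbase.le, one_div_mul_cancel hγ0.ne', Real.rpow_one]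
    field_simp
  have hA0 : 0 < A := by
    rw [hA]
    exact mul_pos (mul_pos hK21pos (div_pos hγ0 hm0)) (Real.rpow_pos_of_pos hxs0 _)
  have hzero : xs^(γ-m) * xs^(m-γ) = 1 := by
    rw [← Real.rpow_add hxs0, show γ-m+(m-γ) = 0 from by ring, Real.rpow_zero]
  have hγm : xs^(γ-m) * xs^m = xs^γ := by
    rw [← Real.rpow_add hxs0, show γ-m+m = γ from by ring]
  have hAx : A * xs^(m-γ) * m = (K₂-K₁)*γ := by
    rw [hA]
    field_simp
    linear_combination hzero
  have hAV : m * (A * xs^m) = γ * (K₂-K₁) * xs^γ := by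
    rw [hA]
    field_simp
    linear_combination hγm
  have hI3 : m * (r - b12*γ + (1/2)*σ12^2*γ*(1-γ)) - r*(m-γ)
      = γ*((1/2)*σ12^2*m*(m-γ)) := by linear_combination (-γ) * hψm
  intro x hx hxne
  have hxγ : 0 < x^γ := Real.rpow_pos_of_pos hx γ
  have hxmp : 0 < x^m := Real.rpow_pos_of_pos hx m
  have hKx1 : K₁*(r - b12*γ + (1/2)*σ12^2*γ*(1-γ))*x^γ = 1*x^γ := by rw [hKD1]
  have hKx2 : K₂*(r - b22*γ + (1/2)*σ22^2*γ*(1-γ))*x^γ = 1*x^γ := by rw [hKD2]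
  have hψx : ((1/2)*σ12^2*m*(m-1) + b12*m - r)*(A*x^m) = 0 := by rw [hψm]; ring
  have hrχ : r * χ12 < 0 := mul_neg_of_pos_of_neg hr hχ12
  have hL21 : Lop b22 σ22 (fun y => K₂ * y ^ γ + χ12) x
      = K₂ * (b22*γ + (1/2)*σ22^2*γ*(γ-1)) * x ^ γ
        + 0 * (b22*m + (1/2)*σ22^2*m*(m-1)) * x ^ m :=
    Lop_eq' b22 σ22 K₂ γ 0 m χ12 hx (Filter.Eventually.of_forall (fun y => by ring))
  have hL22 : Lop b22 σ22 (fun y => K₂ * y ^ γ) x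
      = K₂ * (b22*γ + (1/2)*σ22^2*γ*(γ-1)) * x ^ γ
        + 0 * (b22*m + (1/2)*σ22^2*m*(m-1)) * x ^ m :=
    Lop_eq' b22 σ22 K₂ γ 0 m 0 hx (Filter.Eventually.of_forall (fun y => by ring))
  rcases lt_or_gt_of_ne hxne with hlt | hgt
  · -- x < xs
    have hf11 : (fun y => if y < xs then K₁ * y ^ γ + A * y ^ m + χ12
        else K₂ * y ^ γ - c12 + χ12)
        =ᶠ[nhds x] fun y => K₁ * y ^ γ + A * y ^ m + χ12 := by
      filter_upwards [Iio_mem_nhds hlt] with y hy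
      rw [if_pos (Set.mem_Iio.mp hy)]
    have hf12 : (fun y => if y < xs then K₁ * y ^ γ + A * y ^ m
        else K₂ * y ^ γ - c12)
        =ᶠ[nhds x] fun y => K₁ * y ^ γ + A * y ^ m + 0 := by
      filter_upwards [Iio_mem_nhds hlt] with y hy
      rw [if_pos (Set.mem_Iio.mp hy)]; ring
    have hL11 := Lop_eq' b12 σ12 K₁ γ A m χ12 hx hf11
    have hL12 := Lop_eq' b12 σ12 K₁ γ A m 0 hx hf12
    -- I1 : A x^m ≤ (K₂-K₁) x^γ
    have hxmle : x^(m-γ) ≤ xs^(m-γ) := Real.rpow_le_rpow hx.le hlt.le hmγ0.le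
    have hxmγ : x^(m-γ) * x^γ = x^m := by
      rw [← Real.rpow_add hx, show m-γ+γ = m from by ring]
    have s3 : A * x^(m-γ) ≤ K₂-K₁ := by
      have step1 : A * x^(m-γ) ≤ A * xs^(m-γ) :=
        mul_le_mul_of_nonneg_left hxmle hA0.le
      have step2 : A * xs^(m-γ) = (K₂-K₁)*γ/m := by
        rw [eq_div_iff hm0.ne']; linear_combination hAx
      have step3 : (K₂-K₁)*γ/m ≤ K₂-K₁ := by
        rw [div_le_iff₀ hm0]
        exact mul_le_mul_of_nonneg_left hmγ.le hK21pos.le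
      linarith only [step1, step2.le, step2.ge, step3]
    have hI1 : A * x^m ≤ (K₂-K₁)*x^γ := by
      calc A * x^m = (A * x^(m-γ)) * x^γ := by rw [mul_assoc, hxmγ]
        _ ≤ (K₂-K₁)*x^γ := mul_le_mul_of_nonneg_right s3 hxγ.le
    -- I2 : (K₂-K₁) x^γ - A x^m ≤ c12
    have hI2 : (K₂-K₁)*x^γ - A*x^m ≤ c12 := by
      have hys := young_scaled' hx hxs0 hγ0 hmγ
      have hint1 : m*(A*xs^m)*x^m = γ*(K₂-K₁)*xs^γ*x^m := by
        linear_combination (x^m) * hAV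
      have hint2 := mul_le_mul_of_nonneg_left hys hK21pos.le
      have hint3 : (m-γ)*(K₂-K₁)*xs^γ*xs^m = m*c12*xs^m := by
        linear_combination (xs^m) * hxsγ
      have hmV : 0 < m * xs^m := mul_pos hm0 (Real.rpow_pos_of_pos hxs0 m)
      have hfin : m*xs^m*((K₂-K₁)*x^γ - A*x^m - c12) ≤ 0 := by
        linarith only [hint1, hint2, hint3]
      by_contra hcon
      push_neg at hcon
      have hprod := mul_pos hmV (show (0:ℝ) < (K₂-K₁)*x^γ - A*x^m - c12 by linarith only [hcon])
      linarith only [hfin, hprod]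
    refine ⟨?_, ?_, ?_, ?_⟩
    · simp only [if_pos hlt]
      rw [hL11]
      refine le_antisymm (max_le ((min_le_left _ _).trans ?_) ?_)
        (le_max_of_le_right ?_)
      · linarith only [hKx1, hψx, hrχ]
      · linarith only []
      · linarith only []
    · simp only [if_pos hlt]
      rw [hL12]
      refine le_antisymm (max_le ((min_le_left _ _).trans ?_) ?_)
        ((le_min ?_ ?_).trans (le_max_left _ _))
      · linarith only [hKx1, hψx]
      · linarith only [hχsum]
      · linarith only [hKx1, hψx]
      · linarith only [hI2]
    · simp only [if_pos hlt]
      rw [hL21]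
      refine le_antisymm (max_le ((min_le_left _ _).trans ?_) ?_)
        (le_max_of_le_right ?_)
      · linarith only [hKx2, hrχ]
      · linarith only []
      · linarith only []
    · simp only [if_pos hlt]
      rw [hL22]
      refine le_antisymm (max_le ((min_le_left _ _).trans ?_) ?_)
        ((le_min ?_ ?_).trans (le_max_left _ _))
      · linarith only [hKx2]
      · linarith only [hχsum]
      · linarith only [hKx2]
      · linarith only [hI1, hc21]
  · -- xs < x
    have hnlt : ¬ x < xs := not_lt.2 hgt.le
    have hf12r : (fun y => if y < xs then K₁ * y ^ γ + A * y ^ m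
        else K₂ * y ^ γ - c12)
        =ᶠ[nhds x] fun y => K₂ * y ^ γ + 0 * y ^ m + (-c12) := by
      filter_upwards [Ioi_mem_nhds hgt] with y hy
      rw [if_neg (not_lt.2 (le_of_lt (Set.mem_Ioi.mp hy)))]; ring
    have hL12r := Lop_eq' b12 σ12 K₂ γ 0 m (-c12) hx hf12r
    have hmono : xs^γ ≤ x^γ := Real.rpow_le_rpow hxs0.le hgt.le hγ0.le
    have hint4 : r*((m-γ)*(K₂-K₁)*xs^γ) = r*(m*c12) := by rw [hxsγ]
    have hint5 : ((K₂-K₁)*xs^γ)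
          * (m*(r - b12*γ + (1/2)*σ12^2*γ*(1-γ)) - r*(m-γ))
        = ((K₂-K₁)*xs^γ) * (γ*((1/2)*σ12^2*m*(m-γ))) := by rw [hI3]
    have hint6 := mul_le_mul_of_nonneg_left hmono
      (mul_pos hm0 (mul_pos hK21pos hd11)).le
    have hint7 : m*x^γ*(K₁*(r - b12*γ + (1/2)*σ12^2*γ*(1-γ))) = m*x^γ*1 := by
      rw [hKD1]
    have hint8 : 0 ≤ ((K₂-K₁)*xs^γ)*(γ*((1/2)*σ12^2*m*(m-γ))) :=
      mul_nonneg (mul_pos hK21pos (Real.rpow_pos_of_pos hxs0 γ)).le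
        (mul_nonneg hγ0.le (mul_nonneg
          (mul_nonneg (by positivity) hm0.le) hmγ0.le))
    refine ⟨?_, ?_, ?_, ?_⟩
    · simp only [if_neg hnlt]
      refine le_antisymm (max_le ((min_le_right _ _).trans ?_) ?_)
        (le_max_of_le_right ?_)
      · linarith only []
      · linarith only []
      · linarith only []
    · simp only [if_neg hnlt]
      rw [hL12r]
      refine le_antisymm (max_le ((min_le_right _ _).trans ?_) ?_)
        ((le_min ?_ ?_).trans (le_max_left _ _))
      · linarith only []
      · linarith only [hχsum]
      · have hfin2 : 0 ≤ m*(r*(K₂*x^γ - c12)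
            - (K₂*(b12*γ + (1/2)*σ12^2*γ*(γ-1))*x^γ
              + 0*(b12*m + (1/2)*σ12^2*m*(m-1))*x^m) - x^γ) := by
          linarith only [hint4, hint5, hint6, hint7, hint8]
        by_contra hcon
        push_neg at hcon
        have hprod := mul_pos hm0 (show (0:ℝ) < -(r*(K₂*x^γ - c12)
            - (K₂*(b12*γ + (1/2)*σ12^2*γ*(γ-1))*x^γ
              + 0*(b12*m + (1/2)*σ12^2*m*(m-1))*x^m) - x^γ) by linarith only [hcon])
        linarith only [hfin2, hprod]
      · linarith only []
    · simp only [if_neg hnlt]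
      rw [hL21]
      refine le_antisymm (max_le ((min_le_left _ _).trans ?_) ?_)
        (le_max_of_le_right ?_)
      · linarith only [hKx2, hrχ]
      · linarith only []
      · linarith only []
    · simp only [if_neg hnlt]
      rw [hL22]
      refine le_antisymm (max_le ((min_le_left _ _).trans ?_) ?_)
        ((le_min ?_ ?_).trans (le_max_left _ _))
      · linarith only [hKx2]
      · linarith only [hχsum]
      · linarith only [hKx2]
      · linarith only [hc12, hc21]
end

section
/- Theorem 4.3, case B1. In addition to the common setup, assume b11 = b12, σ11 = σ12, b21 = b22, σ21 = σ22, and K₁ := K_{11} = K_{12} > K_{21} = K_{22} =: K₂; assume c12 > 0, c21 > 0, χ12 > 0, χ21 > 0 (Condition B1). Let m⁺ := m_{21}⁺ (= m_{22}⁺), x* := (m⁺·c21 / ((m⁺ − γ)·(K₁ − K₂)))^{1/γ} and A := (K₁ − K₂)·(γ/m⁺)·(x*)^{γ − m⁺}. Define v11(x) = v12(x) = K₁·x^γ for all x > 0, and v21(x) = v22(x) = K₂·x^γ + A·x^{m⁺} for 0 < x < x* and = K₁·x^γ − c21 for x ≥ x*. Then this quadruple solves the QVI system at every x > 0 with x ≠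 x*. -/
open Filter

lemma Lop_eval {b σ c1 p1 c2 p2 c3 : ℝ} {x : ℝ} (hx : 0 < x)
    {v : ℝ → ℝ} (hv : v =ᶠ[nhds x] fun y => c1 * y ^ p1 + c2 * y ^ p2 + c3) :
    Lop b σ v x =
      c1 * ((1/2)*σ^2*p1*(p1-1) + b*p1) * x ^ p1
      + c2 * ((1/2)*σ^2*p2*(p2-1) + b*p2) * x ^ p2 := by
  have h1 : deriv v =ᶠ[nhds x] fun y => (c1*p1) * y ^ (p1-1) + (c2*p2) * y ^ (p2-1) := by
    filter_upwards [hv.deriv, Ioi_mem_nhds hx] with y h hy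
    rw [h]
    have hd : HasDerivAt (fun z : ℝ => c1 * z ^ p1 + c2 * z ^ p2 + c3)
        (c1 * (p1 * y ^ (p1 - 1)) + c2 * (p2 * y ^ (p2 - 1))) y :=
      (((Real.hasDerivAt_rpow_const (Or.inl (ne_of_gt hy))).const_mul c1).add
        ((Real.hasDerivAt_rpow_const (Or.inl (ne_of_gt hy))).const_mul c2)).add_const c3
    rw [hd.deriv]; ring
  have hd2 : HasDerivAt (fun y : ℝ => (c1*p1) * y ^ (p1-1) + (c2*p2) * y ^ (p2-1))
      ((c1*p1) * ((p1-1) * x ^ (p1-1-1)) + (c2*p2) * ((p2-1) * x ^ (p2-1-1))) x :=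
    (((Real.hasDerivAt_rpow_const (Or.inl (ne_of_gt hx))).const_mul (c1*p1)).add
      ((Real.hasDerivAt_rpow_const (Or.inl (ne_of_gt hx))).const_mul (c2*p2)))
  have hD1 : deriv v x = (c1*p1) * x ^ (p1-1) + (c2*p2) * x ^ (p2-1) := h1.eq_of_nhds
  have hD2 : deriv (deriv v) x
      = (c1*p1) * ((p1-1) * x ^ (p1-1-1)) + (c2*p2) * ((p2-1) * x ^ (p2-1-1)) := by
    rw [h1.deriv.eq_of_nhds, hd2.deriv]
  have e1 : ∀ p : ℝ, x^(2:ℕ) * x^(p-1-1) = x^p := by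
    intro p
    rw [← Real.rpow_natCast x 2, ← Real.rpow_add hx]
    congr 1
    push_cast; ring
  have e2 : ∀ p : ℝ, x * x^(p-1) = x^p := by
    intro p
    calc x * x^(p-1) = x^(1:ℝ) * x^(p-1) := by rw [Real.rpow_one]
    _ = x^(1+(p-1)) := (Real.rpow_add hx _ _).symm
    _ = x^p := by ring_nf
  rw [Lop, hD1, hD2]
  linear_combination ((1/2)*σ^2*(c1*p1)*(p1-1)) * e1 p1 + ((1/2)*σ^2*(c2*p2)*(p2-1)) * e1 p2
    + (b*(c1*p1)) * e2 p1 + (b*(c2*p2)) * e2 p2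

set_option maxHeartbeats 1600000 in
theorem thm4_3_B1
    (r γ c12 c21 χ12 χ21 : ℝ)
    (b11 σ11 b12 σ12 b21 σ21 b22 σ22 : ℝ)
    (K11 K12 K21 K22 : ℝ)
    (hr : 0 < r) (hγ0 : 0 < γ) (hγ1 : γ < 1)
    (hσ11 : 0 < σ11) (hσ12 : 0 < σ12) (hσ21 : 0 < σ21) (hσ22 : 0 < σ22)
    (hd11 : 0 < r - b11*γ + (1/2)*σ11^2*γ*(1-γ))
    (hd12 : 0 < r - b12*γ + (1/2)*σ12^2*γ*(1-γ))
    (hd21 : 0 < r - b21*γ + (1/2)*σ21^2*γ*(1-γ))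
    (hd22 : 0 < r - b22*γ + (1/2)*σ22^2*γ*(1-γ))
    (hrb11 : b11 < r) (hrb12 : b12 < r) (hrb21 : b21 < r) (hrb22 : b22 < r)
    (hK11 : K11 = 1/(r - b11*γ + (1/2)*σ11^2*γ*(1-γ)))
    (hK12 : K12 = 1/(r - b12*γ + (1/2)*σ12^2*γ*(1-γ)))
    (hK21 : K21 = 1/(r - b21*γ + (1/2)*σ21^2*γ*(1-γ)))
    (hK22 : K22 = 1/(r - b22*γ + (1/2)*σ22^2*γ*(1-γ)))
    (heqb12 : b12 = b11) (heqσ12 : σ12 = σ11)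
    (heqb22 : b22 = b21) (heqσ22 : σ22 = σ21)
    (K₁ K₂ : ℝ) (hK₁ : K₁ = K11) (hK₂ : K₂ = K21)
    (hKgt : K₂ < K₁)
    (m : ℝ) (hm : m = 1/2 - b21/σ21^2 + Real.sqrt ((1/2 - b21/σ21^2)^2 + 2*r/σ21^2))
    (xs A : ℝ)
    (hxs : xs = (m * c21 / ((m - γ) * (K₁ - K₂))) ^ (1/γ))
    (hA : A = (K₁ - K₂) * (γ / m) * xs ^ (γ - m))
    (hc12 : 0 < c12) (hc21 : 0 < c21) (hχ12 : 0 < χ12) (hχ21 : 0 < χ21)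
    :
    ∀ x : ℝ, 0 < x → x ≠ xs →
      solvesQVI r γ c12 c21 χ12 χ21 b11 σ11 b12 σ12 b21 σ21 b22 σ22
        (fun y => K₁ * y ^ γ)
        (fun y => K₁ * y ^ γ)
        (fun y => if y < xs then K₂ * y ^ γ + A * y ^ m else K₁ * y ^ γ - c21)
        (fun y => if y < xs then K₂ * y ^ γ + A * y ^ m else K₁ * y ^ γ - c21) x := by
  subst b12 σ12 b22 σ22
  intro x hx hxne
  have hσ2 : (0:ℝ) < σ21^2 := by positivity
  set a : ℝ := 1/2 - b21/σ21^2 with ha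
  clear_value a
  have harg : 0 ≤ a^2 + 2*r/σ21^2 := by positivity
  have hs2 : Real.sqrt (a^2 + 2*r/σ21^2) ^ 2 = a^2 + 2*r/σ21^2 := Real.sq_sqrt harg
  have hsnn : 0 ≤ Real.sqrt (a^2 + 2*r/σ21^2) := Real.sqrt_nonneg _
  have hq : (m - a)^2 = a^2 + 2*r/σ21^2 := by rw [hm, add_sub_cancel_left]; exact hs2
  have haσ : a * σ21^2 = (1/2)*σ21^2 - b21 := by rw [ha]; field_simp
  have hFm : (1/2)*σ21^2*m*(m-1) + b21*m - r = 0 := by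
    have h2r : m^2 - 2*a*m - 2*r/σ21^2 = 0 := by linear_combination hq
    field_simp at h2r
    linear_combination (1/2)*h2r + m*haσ
  have hma : 0 ≤ m - a := by rw [hm, add_sub_cancel_left]; exact hsnn
  have hmγ : γ < m := by
    have e : a^2 + 2*r/σ21^2 - (γ - a)^2
        = (2/σ21^2)*(r - b21*γ + (1/2)*σ21^2*γ*(1-γ)) := by
      rw [ha]; field_simp; ring
    have h1 : (γ - a)^2 < (m - a)^2 := by
      have h2 := mul_pos (show (0:ℝ) < 2/σ21^2 by positivity) hd21
      rw [hq]; linarith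
    have h3 : γ - a < m - a := by
      by_contra hcon
      push_neg at hcon
      exact absurd (pow_le_pow_left₀ hma hcon 2) (not_le.mpr h1)
    linarith
  have hm0 : 0 < m := hγ0.trans hmγ
  have hmγ' : 0 < m - γ := sub_pos.mpr hmγ
  have hK2pos : 0 < K₂ := by rw [hK₂, hK21]; positivity
  have hCpos : 0 < K₁ - K₂ := sub_pos.mpr hKgt
  have hbase : 0 < m*c21/((m-γ)*(K₁-K₂)) := div_pos (by positivity) (mul_pos hmγ' hCpos)
  have hxsp : 0 < xs := by
    rw [hxs]; exact Real.rpow_pos_of_pos hbase _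
  have hxsγ : xs ^ γ = m*c21/((m-γ)*(K₁-K₂)) := by
    rw [hxs, ← Real.rpow_mul hbase.le, one_div, inv_mul_cancel₀ (ne_of_gt hγ0), Real.rpow_one]
  have hApos : 0 < A := by
    rw [hA]; exact mul_pos (mul_pos hCpos (div_pos hγ0 hm0)) (Real.rpow_pos_of_pos hxsp _)
  have hc21eq : (K₁-K₂) * ((m-γ)/m) * xs^γ = c21 := by
    rw [hxsγ]; field_simp [hm0.ne', hmγ'.ne', hCpos.ne']
  have hK₂D : K₂ * (r - b21*γ + (1/2)*σ21^2*γ*(1-γ)) = 1 := by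
    rw [hK₂, hK21]; exact one_div_mul_cancel hd21.ne'
  have hK₁D : K₁ * (r - b11*γ + (1/2)*σ11^2*γ*(1-γ)) = 1 := by
    rw [hK₁, hK11]; exact one_div_mul_cancel hd11.ne'
  have hW1 : xs^(γ-m) * xs^(m-γ) = 1 := by
    rw [← Real.rpow_add hxsp, show γ-m+(m-γ) = 0 from by ring, Real.rpow_zero]
  have hW2 : xs^(γ-m) * xs^m = xs^γ := by
    rw [← Real.rpow_add hxsp, show γ-m+m = γ from by ring]
  have hxγpos : 0 < x^γ := Real.rpow_pos_of_pos hx γ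
  have hxmpos : 0 < x^m := Real.rpow_pos_of_pos hx m
  have amgm0 := Real.geom_mean_le_arith_mean2_weighted
      (le_of_lt (div_pos hγ0 hm0)) (le_of_lt (div_pos hmγ' hm0))
      hxmpos.le (Real.rpow_pos_of_pos hxsp m).le
      (by field_simp; ring)
  have hpow1 : (x^m)^(γ/m) = x^γ := by
    rw [← Real.rpow_mul hx.le]; congr 1; field_simp
  have hpow2 : (xs^m)^((m-γ)/m) = xs^(m-γ) := by
    rw [← Real.rpow_mul hxsp.le]; congr 1; field_simp
  rw [hpow1, hpow2] at amgm0
  have key := mul_le_mul_of_nonneg_left amgm0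
      (le_of_lt (mul_pos hCpos (Real.rpow_pos_of_pos hxsp (γ-m))))
  have hAMGM : (K₁-K₂) * x^γ ≤ A * x^m + c21 := by
    calc (K₁-K₂) * x^γ = (K₁-K₂)*xs^(γ-m) * (x^γ * xs^(m-γ)) := by
          linear_combination (-((K₁-K₂) * x^γ)) * hW1
    _ ≤ (K₁-K₂)*xs^(γ-m) * (γ/m*(x^m) + (m-γ)/m*(xs^m)) := key
    _ = A * x^m + c21 := by
          rw [hA]
          linear_combination ((K₁-K₂)*((m-γ)/m)) * hW2 + hc21eq
  have hv1 : (fun y : ℝ => K₁ * y ^ γ) =ᶠ[nhds x] fun y => K₁ * y ^ γ + 0 * y ^ γ + 0 :=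
    Filter.Eventually.of_forall (fun y => by ring)
  have hEv1 : r * (K₁ * x ^ γ) - Lop b11 σ11 (fun y => K₁ * y ^ γ) x - x ^ γ = 0 := by
    rw [Lop_eval hx hv1]
    linear_combination (x^γ) * hK₁D
  simp only [solvesQVI]
  rcases lt_or_gt_of_ne hxne with hlt | hgt
  · -- x < xs
    have hv2 : (fun y : ℝ => if y < xs then K₂*y^γ + A*y^m else K₁*y^γ - c21) =ᶠ[nhds x]
        fun y => K₂*y^γ + A*y^m + 0 := by
      filter_upwards [Iio_mem_nhds hlt] with y hy
      simp only [if_pos (show y < xs from hy)]; ring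
    have hEv2 : r * (K₂*x^γ + A*x^m) -
        Lop b21 σ21 (fun y => if y < xs then K₂*y^γ + A*y^m else K₁*y^γ - c21) x - x^γ = 0 := by
      rw [Lop_eval hx hv2]
      linear_combination (x^γ) * hK₂D - (A * x^m) * hFm
    have hPQ : x^(m-γ) ≤ xs^(m-γ) := Real.rpow_le_rpow hx.le hlt.le hmγ'.le
    have hxm : x^(m-γ) * x^γ = x^m := by
      rw [← Real.rpow_add hx, show m-γ+γ = m from by ring]
    have hHle : A * x^m ≤ (K₁-K₂) * x^γ := by
      rw [hA, ← hxm]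
      have huP : xs^(γ-m) * x^(m-γ) ≤ 1 := by
        calc xs^(γ-m) * x^(m-γ) ≤ xs^(γ-m) * xs^(m-γ) :=
              mul_le_mul_of_nonneg_left hPQ (Real.rpow_pos_of_pos hxsp _).le
        _ = 1 := hW1
      have hγm1 : γ/m ≤ 1 := by rw [div_le_one hm0]; exact hmγ.le
      have h1 : (γ/m) * (xs^(γ-m) * x^(m-γ)) ≤ 1 :=
        mul_le_one₀ hγm1
          (mul_nonneg (Real.rpow_pos_of_pos hxsp (γ-m)).le
            (Real.rpow_pos_of_pos hx (m-γ)).le) huP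
      have h2 := mul_le_mul_of_nonneg_left h1 (mul_pos hCpos hxγpos).le
      linarith [h2]
    have hI1 : (0:ℝ) ≤ K₁*x^γ - (K₂*x^γ + A*x^m - c12) := by linarith [hHle, hc12]
    have hI3 : (0:ℝ) ≤ K₂*x^γ + A*x^m - (K₁*x^γ - c21) := by linarith [hAMGM]
    refine ⟨?_, ?_, ?_, ?_⟩
    · rw [if_pos hlt, hEv1, min_eq_left hI1,
        max_eq_left (show K₁*x^γ - (K₁*x^γ + χ12) ≤ 0 by linarith)]
    · rw [if_pos hlt, hEv1, min_eq_left hI1,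
        max_eq_left (show K₁*x^γ - (K₁*x^γ + χ21) ≤ 0 by linarith)]
    · rw [if_pos hlt, hEv2, min_eq_left hI3,
        max_eq_left (show K₂*x^γ + A*x^m - (K₂*x^γ + A*x^m + χ12) ≤ 0 by linarith)]
    · rw [if_pos hlt, hEv2, min_eq_left hI3,
        max_eq_left (show K₂*x^γ + A*x^m - (K₂*x^γ + A*x^m + χ21) ≤ 0 by linarith)]
  · -- xs < x
    have hnlt : ¬ x < xs := not_lt.mpr hgt.le
    have hv2' : (fun y : ℝ => if y < xs then K₂*y^γ + A*y^m else K₁*y^γ - c21) =ᶠ[nhds x]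
        fun y => K₁*y^γ + 0*y^m + (-c21) := by
      filter_upwards [Ioi_mem_nhds hgt] with y hy
      simp only [if_neg (not_lt.mpr (le_of_lt (Set.mem_Ioi.mp hy)))]; ring
    have hxlt : xs^γ < x^γ := Real.rpow_lt_rpow hxsp.le hgt hγ0
    have hxsC : xs^γ * ((m-γ)*(K₁-K₂)) = m*c21 := by
      rw [hxsγ]; field_simp
    have h5 : m*(r - b21*γ + (1/2)*σ21^2*γ*(1-γ)) - r*(m-γ) = γ*((1/2)*σ21^2)*m*(m-γ) := by
      linear_combination (-γ)*hFm
    have hnn : 0 < γ*((1/2)*σ21^2)*m*(m-γ) :=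
      mul_pos (mul_pos (mul_pos hγ0 (by positivity)) hm0) hmγ'
    have hmD : r*(m-γ) ≤ m*(r - b21*γ + (1/2)*σ21^2*γ*(1-γ)) := by linarith [h5, hnn]
    have step1 : m*c21 ≤ x^γ*((m-γ)*(K₁-K₂)) := by
      linarith [mul_pos (sub_pos.mpr hxlt) (mul_pos hmγ' hCpos), hxsC]
    have A1 := mul_le_mul_of_nonneg_right step1 hd21.le
    have A2 := mul_le_mul_of_nonneg_right hmD hc21.le
    have hfin : r*c21 ≤ x^γ*((K₁-K₂)*(r - b21*γ + (1/2)*σ21^2*γ*(1-γ))) := by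
      nlinarith only [A1, A2, hmγ', hc21, hr]
    have hxK : x^γ*(K₂*(r - b21*γ + (1/2)*σ21^2*γ*(1-γ))) = x^γ := by
      linear_combination (x^γ)*hK₂D
    have hEpos : 0 ≤ r * (K₁*x^γ - c21) -
        Lop b21 σ21 (fun y => if y < xs then K₂*y^γ + A*y^m else K₁*y^γ - c21) x - x^γ := by
      rw [Lop_eval hx hv2']
      linarith [hfin, hxK]
    refine ⟨?_, ?_, ?_, ?_⟩
    · rw [if_neg hnlt, hEv1,
        min_eq_left (show (0:ℝ) ≤ K₁*x^γ - (K₁*x^γ - c21 - c12) by linarith),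
        max_eq_left (show K₁*x^γ - (K₁*x^γ + χ12) ≤ 0 by linarith)]
    · rw [if_neg hnlt, hEv1,
        min_eq_left (show (0:ℝ) ≤ K₁*x^γ - (K₁*x^γ - c21 - c12) by linarith),
        max_eq_left (show K₁*x^γ - (K₁*x^γ + χ21) ≤ 0 by linarith)]
    · rw [if_neg hnlt, sub_self, min_eq_right hEpos,
        max_eq_left (show K₁*x^γ - c21 - (K₁*x^γ - c21 + χ12) ≤ 0 by linarith)]
    · rw [if_neg hnlt, sub_self, min_eq_right hEpos,
        max_eq_left (show K₁*x^γ - c21 - (K₁*x^γ - c21 + χ21) ≤ 0 by linarith)]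
end

section
/- Theorem 4.5, case B3. In addition to the common setup, assume b11 = b21, σ11 = σ21, b12 = b22, σ12 = σ22, and K₁ := K_{11} = K_{21} > K_{12} = K_{22} =: K₂; assume c12 > 0, c21 > 0, χ12 < 0, χ21 > 0 and χ12 + χ21 > 0 (Condition B3). Then the quadruple v11(x) = K₂·x^γ + χ12, v12(x) = K₂·x^γ, v21(x) = K₂·x^γ + χ12, v22(x) = K₂·x^γ solves the QVI system at every x > 0. -/
lemma deriv_aux (K c γ : ℝ) {x : ℝ} (hx : 0 < x) :
    deriv (fun y : ℝ => K * y ^ γ + c) x = K * γ * x ^ (γ - 1) := by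
  have h := (((Real.hasDerivAt_rpow_const (p := γ) (Or.inl hx.ne')).const_mul K).add_const c)
  rw [h.deriv]; ring

lemma Lop_aux (b σ K c γ : ℝ) {x : ℝ} (hx : 0 < x) :
    Lop b σ (fun y : ℝ => K * y ^ γ + c) x
      = (b * γ + (1/2) * σ^2 * γ * (γ - 1)) * K * x ^ γ := by
  have hmem : Set.Ioi (0:ℝ) ∈ nhds x := Ioi_mem_nhds hx
  have heq : deriv (fun y : ℝ => K * y ^ γ + c) =ᶠ[nhds x]
      (fun y : ℝ => K * γ * y ^ (γ - 1)) :=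
    Filter.eventuallyEq_of_mem hmem (fun y hy => deriv_aux K c γ hy)
  have hd2 : deriv (deriv (fun y : ℝ => K * y ^ γ + c)) x
      = K * γ * (γ - 1) * x ^ (γ - 1 - 1) := by
    rw [heq.deriv_eq]
    have h := ((Real.hasDerivAt_rpow_const (p := γ - 1) (Or.inl hx.ne')).const_mul (K * γ))
    rw [h.deriv]; ring
  have hB : x * x ^ (γ - 1) = x ^ γ := by
    rw [show γ = 1 + (γ - 1) by ring, Real.rpow_add hx, Real.rpow_one]; ring_nf
  have hA : x ^ (2:ℕ) * x ^ (γ - 1 - 1) = x ^ γ := by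
    rw [← Real.rpow_natCast x 2, ← Real.rpow_add hx]; congr 1; push_cast; ring
  rw [Lop, hd2, deriv_aux K c γ hx]
  linear_combination ((1/2)*σ^2*K*γ*(γ-1))*hA + (b*K*γ)*hB

lemma Lop_aux0 (b σ K γ : ℝ) {x : ℝ} (hx : 0 < x) :
    Lop b σ (fun y : ℝ => K * y ^ γ) x
      = (b * γ + (1/2) * σ^2 * γ * (γ - 1)) * K * x ^ γ := by
  have h : (fun y : ℝ => K * y ^ γ) = fun y : ℝ => K * y ^ γ + 0 := by
    funext y; ring
  rw [h, Lop_aux b σ K 0 γ hx]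

lemma pt1 (A B C : ℝ) (hA : A ≤ 0) (hC : C = 0) : max (min A B) C = 0 := by
  subst hC; exact max_eq_right (le_trans (min_le_left _ _) hA)

lemma pt2 (A B C : ℝ) (hA : A = 0) (hB : 0 ≤ B) (hC : C ≤ 0) : max (min A B) C = 0 := by
  subst hA; rw [min_eq_left hB, max_eq_left hC]

set_option maxHeartbeats 1600000 in
theorem thm4_5_B3
    (r γ c12 c21 χ12 χ21 : ℝ)
    (b11 σ11 b12 σ12 b21 σ21 b22 σ22 : ℝ)
    (K11 K12 K21 K22 : ℝ)
    (hr : 0 < r) (hγ0 : 0 < γ) (hγ1 : γ < 1)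
    (hσ11 : 0 < σ11) (hσ12 : 0 < σ12) (hσ21 : 0 < σ21) (hσ22 : 0 < σ22)
    (hd11 : 0 < r - b11*γ + (1/2)*σ11^2*γ*(1-γ))
    (hd12 : 0 < r - b12*γ + (1/2)*σ12^2*γ*(1-γ))
    (hd21 : 0 < r - b21*γ + (1/2)*σ21^2*γ*(1-γ))
    (hd22 : 0 < r - b22*γ + (1/2)*σ22^2*γ*(1-γ))
    (hrb11 : b11 < r) (hrb12 : b12 < r) (hrb21 : b21 < r) (hrb22 : b22 < r)
    (hK11 : K11 = 1/(r - b11*γ + (1/2)*σ11^2*γ*(1-γ)))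
    (hK12 : K12 = 1/(r - b12*γ + (1/2)*σ12^2*γ*(1-γ)))
    (hK21 : K21 = 1/(r - b21*γ + (1/2)*σ21^2*γ*(1-γ)))
    (hK22 : K22 = 1/(r - b22*γ + (1/2)*σ22^2*γ*(1-γ)))
    (heqb21 : b21 = b11) (heqσ21 : σ21 = σ11)
    (heqb22 : b22 = b12) (heqσ22 : σ22 = σ12)
    (K₁ K₂ : ℝ) (hK₁ : K₁ = K11) (hK₂ : K₂ = K12)
    (hKgt : K₂ < K₁)
    (hc12 : 0 < c12) (hc21 : 0 < c21) (hχ12 : χ12 < 0) (hχ21 : 0 < χ21)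
    (hχsum : 0 < χ12 + χ21)
    :
    ∀ x : ℝ, 0 < x →
      solvesQVI r γ c12 c21 χ12 χ21 b11 σ11 b12 σ12 b21 σ21 b22 σ22
        (fun y => K₂ * y ^ γ + χ12)
        (fun y => K₂ * y ^ γ)
        (fun y => K₂ * y ^ γ + χ12)
        (fun y => K₂ * y ^ γ) x := by
  intro x hx
  have hxγ : 0 < x ^ γ := Real.rpow_pos_of_pos hx γ
  have hKgt' : 1/(r - b12*γ + (1/2)*σ12^2*γ*(1-γ)) < 1/(r - b11*γ + (1/2)*σ11^2*γ*(1-γ)) := by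
    rw [← hK12, ← hK₂, ← hK11, ← hK₁]; exact hKgt
  have hD1D2 : r - b11*γ + (1/2)*σ11^2*γ*(1-γ) < r - b12*γ + (1/2)*σ12^2*γ*(1-γ) :=
by
    have h := (div_lt_div_iff₀ hd12 hd11).mp hKgt'
    linarith
  have hK2pos : 0 < K₂ := by rw [hK₂, hK12]; positivity
  have hK2D2 : K₂ * (r - b12*γ + (1/2)*σ12^2*γ*(1-γ)) = 1 := by
    rw [hK₂, hK12, one_div, inv_mul_cancel₀ hd12.ne']
  have hK2D1lt : K₂ * (r - b11*γ + (1/2)*σ11^2*γ*(1-γ)) < 1 := by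
    nlinarith [hK2pos, hD1D2, hK2D2]
  have hrχ : r * χ12 < 0 := mul_neg_of_pos_of_neg hr hχ12
  have hXle : K₂ * (r - b11*γ + (1/2)*σ11^2*γ*(1-γ)) * x ^ γ ≤ x ^ γ := by
    have h := mul_le_mul_of_nonneg_right hK2D1lt.le hxγ.le
    rwa [one_mul] at h
  unfold solvesQVI
  refine ⟨?_, ?_, ?_, ?_⟩ <;> beta_reduce
  · rw [Lop_aux b11 σ11 K₂ χ12 γ hx]
    apply pt1
    · nlinarith [hXle, hrχ]
    · ring
  · rw [Lop_aux0 b12 σ12 K₂ γ hx]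
    apply pt2
    · linear_combination (x ^ γ) * hK2D2
    · nlinarith [hc12]
    · nlinarith [hχsum]
  · rw [heqb21, heqσ21, Lop_aux b11 σ11 K₂ χ12 γ hx]
    apply pt1
    · nlinarith [hXle, hrχ]
    · ring
  · rw [heqb22, heqσ22, Lop_aux0 b12 σ12 K₂ γ hx]
    apply pt2
    · linear_combination (x ^ γ) * hK2D2
    · nlinarith [hc21]
    · nlinarith [hχsum]
end
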